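/- arXiv:1905.10241 — 6 statements merged into one kernel-verified Lean document; each statement's English description precedes it below -/
import Mathlib

section
/- Let γ = (γ₀,…,γₙ) with |γ_ℓ| < 1 for all ℓ, and let A_k, B_k be the Schur polynomials associated to γ. Then for all k = 0,…,n and all z in the closed unit disk: |B_k(z)|² − |A_k(z)|² ≥ ∏_{ℓ=0}^{k} (1 − |γ_ℓ|²). In particular B_k has no zeros in the closed unit disk. -/
open Complex Metric Set Finset

lemma schur_key (g z a b : ℂ) :
    Complex.normSq (g * z * a + b) - Complex.normSq (z * a + (starRingEnd ℂ) g * b) =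
      (1 - Complex.normSq g) * (Complex.normSq b - Complex.normSq z * Complex.normSq a) := by
  simp only [Complex.normSq_apply, Complex.add_re, Complex.add_im, Complex.mul_re,
    Complex.mul_im, Complex.conj_re, Complex.conj_im]
  ring

/-- Lemma 3.7: on the closed unit disk,
`|B_k(z)|² − |A_k(z)|² ≥ ∏_{ℓ=0}^k (1 − |γ_ℓ|²)`; in particular `B_k` has no
zeros in the closed unit disk. -/
theorem stmt_7 (n : ℕ) (γ : ℕ → ℂ) (A B At Bt : ℕ → ℂ → ℂ)
    (hA0 : ∀ z, A 0 z = (starRingEnd ℂ) (γ 0)) (hB0 : ∀ z, B 0 z = 1)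
    (hAt0 : ∀ z, At 0 z = 1) (hBt0 : ∀ z, Bt 0 z = γ 0)
    (hA : ∀ k z, A (k + 1) z = z * A k z + (starRingEnd ℂ) (γ (k + 1)) * B k z)
    (hB : ∀ k z, B (k + 1) z = γ (k + 1) * z * A k z + B k z)
    (hAt : ∀ k z, At (k + 1) z = z * At k z + (starRingEnd ℂ) (γ (k + 1)) * Bt k z)
    (hBt : ∀ k z, Bt (k + 1) z = γ (k + 1) * z * At k z + Bt k z)
    (hγ : ∀ l, ‖γ l‖ < 1) :
    ∀ k ≤ n, ∀ z ∈ Metric.closedBall (0 : ℂ) 1,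
      (∏ l ∈ Finset.range (k + 1), (1 - ‖γ l‖ ^ 2)) ≤
          ‖B k z‖ ^ 2 - ‖A k z‖ ^ 2 ∧
        B k z ≠ 0 := by
  have hpos : ∀ k, 0 < ∏ l ∈ Finset.range (k + 1), (1 - ‖γ l‖ ^ 2) := by
    intro k
    apply Finset.prod_pos
    intro l _
    have h := hγ l
    have h0 := norm_nonneg (γ l)
    nlinarith
  have main : ∀ k, ∀ z ∈ Metric.closedBall (0 : ℂ) 1,
      (∏ l ∈ Finset.range (k + 1), (1 - ‖γ l‖ ^ 2)) ≤
        ‖B k z‖ ^ 2 - ‖A k z‖ ^ 2 := by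
    intro k
    induction k with
    | zero =>
      intro z hz
      simp [hA0, hB0]
    | succ k ih =>
      intro z hz
      have hzle : ‖z‖ ≤ 1 := by
        simpa using Metric.mem_closedBall.mp hz
      have ihz := ih z hz
      rw [Finset.prod_range_succ]
      have key : ‖B (k + 1) z‖ ^ 2 - ‖A (k + 1) z‖ ^ 2 =
          (1 - ‖γ (k + 1)‖ ^ 2) *
            (‖B k z‖ ^ 2 - ‖z‖ ^ 2 * ‖A k z‖ ^ 2) := by
        rw [hA, hB]
        simp only [Complex.sq_norm]
        exact schur_key _ _ _ _
      rw [key]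
      have hg := hγ (k + 1)
      have hg0 := norm_nonneg (γ (k + 1))
      have hgm : 0 < 1 - ‖γ (k + 1)‖ ^ 2 := by nlinarith
      have hA2 : (0:ℝ) ≤ ‖A k z‖ ^ 2 := sq_nonneg _
      have hstep : ‖B k z‖ ^ 2 - ‖A k z‖ ^ 2 ≤
          ‖B k z‖ ^ 2 - ‖z‖ ^ 2 * ‖A k z‖ ^ 2 := by
        have hz2 : ‖z‖ ^ 2 ≤ 1 := by nlinarith [norm_nonneg z]
        nlinarith [mul_nonneg (sub_nonneg.mpr hz2) hA2]
      calc (∏ l ∈ Finset.range (k + 1), (1 - ‖γ l‖ ^ 2)) *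
            (1 - ‖γ (k + 1)‖ ^ 2)
          ≤ (‖B k z‖ ^ 2 - ‖A k z‖ ^ 2) *
            (1 - ‖γ (k + 1)‖ ^ 2) := by
            exact mul_le_mul_of_nonneg_right ihz hgm.le
        _ ≤ (1 - ‖γ (k + 1)‖ ^ 2) *
            (‖B k z‖ ^ 2 - ‖z‖ ^ 2 * ‖A k z‖ ^ 2) := by
            rw [mul_comm]
            exact mul_le_mul_of_nonneg_left hstep hgm.le
  intro k _ z hz
  refine ⟨main k z hz, ?_⟩
  intro hBz
  have h := main k z hz
  rw [hBz] at h
  simp only [norm_zero] at h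
  have := hpos k
  nlinarith [sq_nonneg (‖A k z‖)]
end

section
/- Let γ = (γ₀,…,γₙ) with |γ_ℓ| < 1 for all ℓ, and let B_k, B̃_k be the Schur polynomials associated to γ (B₀ = 1, B̃₀ = γ₀, B_{k+1}(z) = γ_{k+1} z A_k(z) + B_k(z), B̃_{k+1}(z) = γ_{k+1} z Ã_k(z) + B̃_k(z), with A₀ = conj(γ₀), Ã₀ = 1, A_{k+1}(z) = z A_k(z) + conj(γ_{k+1}) B_k(z), Ã_{k+1}(z) = z Ã_k(z) + conj(γ_{k+1}) B̃_k(z)). Then |B̃_k(z)| < |B_k(z)| for all z in the closed unit disk and all k = 0,…,n. -/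
open Complex Metric Set Finset

/-- Lemma 3.8: `|B̃_k(z)| < |B_k(z)|` on the closed unit disk. -/
theorem stmt_8 (n : ℕ) (γ : ℕ → ℂ) (A B At Bt : ℕ → ℂ → ℂ)
    (hA0 : ∀ z, A 0 z = (starRingEnd ℂ) (γ 0)) (hB0 : ∀ z, B 0 z = 1)
    (hAt0 : ∀ z, At 0 z = 1) (hBt0 : ∀ z, Bt 0 z = γ 0)
    (hA : ∀ k z, A (k + 1) z = z * A k z + (starRingEnd ℂ) (γ (k + 1)) * B k z)
    (hB : ∀ k z, B (k + 1) z = γ (k + 1) * z * A k z + B k z)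
    (hAt : ∀ k z, At (k + 1) z = z * At k z + (starRingEnd ℂ) (γ (k + 1)) * Bt k z)
    (hBt : ∀ k z, Bt (k + 1) z = γ (k + 1) * z * At k z + Bt k z)
    (hγ : ∀ l, ‖γ l‖ < 1) :
    ∀ k ≤ n, ∀ z ∈ Metric.closedBall (0 : ℂ) 1,
      ‖Bt k z‖ < ‖B k z‖ := by
  -- differentiability of all four families
  have hdiff : ∀ k, Differentiable ℂ (A k) ∧ Differentiable ℂ (B k) ∧
      Differentiable ℂ (At k) ∧ Differentiable ℂ (Bt k) := by
    intro k
    induction k with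
    | zero =>
      refine ⟨?_, ?_, ?_, ?_⟩
      · have : A 0 = fun _ => (starRingEnd ℂ) (γ 0) := funext hA0
        rw [this]; exact differentiable_const _
      · have : B 0 = fun _ => (1 : ℂ) := funext hB0
        rw [this]; exact differentiable_const _
      · have : At 0 = fun _ => (1 : ℂ) := funext hAt0
        rw [this]; exact differentiable_const _
      · have : Bt 0 = fun _ => γ 0 := funext hBt0
        rw [this]; exact differentiable_const _
    | succ k ih =>
      obtain ⟨dA, dB, dAt, dBt⟩ := ih
      refine ⟨?_, ?_, ?_, ?_⟩
      · have : A (k+1) = fun z => z * A k z + (starRingEnd ℂ) (γ (k+1)) * B k z :=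
          funext (hA k)
        rw [this]; exact (differentiable_id.mul dA).add (dB.const_mul _)
      · have : B (k+1) = fun z => γ (k+1) * z * A k z + B k z := funext (hB k)
        rw [this]; exact (((differentiable_const _).mul differentiable_id).mul dA).add dB
      · have : At (k+1) = fun z => z * At k z + (starRingEnd ℂ) (γ (k+1)) * Bt k z :=
          funext (hAt k)
        rw [this]; exact (differentiable_id.mul dAt).add (dBt.const_mul _)
      · have : Bt (k+1) = fun z => γ (k+1) * z * At k z + Bt k z := funext (hBt k)
        rw [this]; exact (((differentiable_const _).mul differentiable_id).mul dAt).add dBt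
  -- pointwise strict inequality |A_k z| < |B_k z| on the closed disk
  have hAB : ∀ k, ∀ z : ℂ, ‖z‖ ≤ 1 →
      ‖A k z‖ < ‖B k z‖ := by
    intro k
    induction k with
    | zero =>
      intro z hz
      rw [hA0, hB0]
      simpa using hγ 0
    | succ k ih =>
      intro z hz
      have key : ((Complex.normSq (B (k+1) z) : ℂ)) - (Complex.normSq (A (k+1) z) : ℂ) =
          (1 - (Complex.normSq (γ (k+1)) : ℂ)) *
            ((Complex.normSq (B k z) : ℂ) -
              (Complex.normSq z : ℂ) * (Complex.normSq (A k z) : ℂ)) := by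
        simp only [← Complex.mul_conj, hA, hB, map_add, map_mul, Complex.conj_conj]
        ring
      have keyR : Complex.normSq (B (k+1) z) - Complex.normSq (A (k+1) z) =
          (1 - Complex.normSq (γ (k+1))) *
            (Complex.normSq (B k z) - Complex.normSq z * Complex.normSq (A k z)) := by
        exact_mod_cast key
      have ha := ih z hz
      have hg := hγ (k+1)
      have h0a := norm_nonneg (A k z)
      have h0z := norm_nonneg z
      have h0g := norm_nonneg (γ (k+1))
      simp only [← Complex.sq_norm] at keyR
      have e3 : 0 < 1 - ‖γ (k+1)‖ ^ 2 := by nlinarith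
      have ha2 : ‖A k z‖ ^ 2 < ‖B k z‖ ^ 2 := by nlinarith
      have ht2 : ‖z‖ ^ 2 ≤ 1 := by nlinarith
      have e4 : ‖z‖ ^ 2 * ‖A k z‖ ^ 2 ≤ ‖A k z‖ ^ 2 :=
        mul_le_of_le_one_left (sq_nonneg _) ht2
      have hpos : 0 < ‖B (k+1) z‖ ^ 2 - ‖A (k+1) z‖ ^ 2 := by
        rw [keyR]
        exact mul_pos e3 (by linarith)
      exact lt_of_pow_lt_pow_left₀ 2 (norm_nonneg _) (by nlinarith)
  -- reversal identities on the unit circle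
  have hcirc : ∀ k, ∀ z : ℂ, ‖z‖ = 1 →
      Bt k z = z ^ k * (starRingEnd ℂ) (A k z) ∧
      At k z = z ^ k * (starRingEnd ℂ) (B k z) := by
    intro k
    induction k with
    | zero =>
      intro z hz
      rw [hBt0, hAt0, hA0, hB0]
      simp
    | succ k ih =>
      intro z hz
      have hz1 : z * (starRingEnd ℂ) z = 1 := by
        rw [Complex.mul_conj]
        norm_cast
        rw [Complex.normSq_eq_norm_sq, hz]; norm_num
      obtain ⟨h1, h2⟩ := ih z hz
      constructor
      · rw [hBt k, hA k, h1, h2]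
        simp only [map_add, map_mul, Complex.conj_conj]
        linear_combination (-(z ^ k * (starRingEnd ℂ) (A k z))) * hz1
      · rw [hAt k, hB k, h1, h2]
        simp only [map_add, map_mul, Complex.conj_conj]
        linear_combination (-((starRingEnd ℂ) (γ (k+1)) * z ^ k * (starRingEnd ℂ) (A k z))) * hz1
  -- nonvanishing of B k on the closed disk
  have hBpos : ∀ k, ∀ z : ℂ, ‖z‖ ≤ 1 → 0 < ‖B k z‖ :=
    fun k z hz => lt_of_le_of_lt (norm_nonneg _) (hAB k z hz)
  -- main argument via the maximum modulus principle
  intro k _ z hz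
  rw [Metric.mem_closedBall, dist_zero_right] at hz
  set g : ℂ → ℂ := fun w => Bt k w / B k w with hg
  have hBne : ∀ w : ℂ, ‖w‖ ≤ 1 → B k w ≠ 0 := fun w hw =>
    norm_ne_zero_iff.mp (ne_of_gt (hBpos k w hw))
  have hBneBall : ∀ w ∈ Metric.closedBall (0:ℂ) 1, B k w ≠ 0 := by
    intro w hw
    rw [Metric.mem_closedBall, dist_zero_right] at hw
    exact hBne w hw
  have hgd : DiffContOnCl ℂ g (Metric.ball (0:ℂ) 1) := by
    constructor
    · exact DifferentiableOn.div ((hdiff k).2.2.2).differentiableOn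
        ((hdiff k).2.1).differentiableOn
        (fun w hw => hBneBall w (Metric.ball_subset_closedBall hw))
    · rw [closure_ball (0:ℂ) one_ne_zero]
      exact ContinuousOn.div ((hdiff k).2.2.2).continuous.continuousOn
        ((hdiff k).2.1).continuous.continuousOn hBneBall
  -- boundary bound: maximum of ‖g‖ on the sphere
  have hsne : (Metric.sphere (0:ℂ) 1).Nonempty :=
    NormedSpace.sphere_nonempty.mpr zero_le_one
  obtain ⟨w0, hw0, hmax⟩ := (isCompact_sphere (0:ℂ) 1).exists_isMaxOn hsne
    (((hdiff k).2.2.2).continuous.continuousOn.div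
      ((hdiff k).2.1).continuous.continuousOn
      (fun w hw => hBneBall w (Metric.sphere_subset_closedBall hw))).norm
  have habs_sphere : ∀ w : ℂ, ‖w‖ = 1 → ‖g w‖ < 1 := by
    intro w hw
    have h1 := (hcirc k w hw).1
    have h2 := hAB k w (le_of_eq hw)
    have hb := hBpos k w (le_of_eq hw)
    have : ‖Bt k w‖ < ‖B k w‖ := by
      rw [h1, norm_mul, norm_pow, hw, one_pow, one_mul, Complex.norm_conj]
      exact h2
    simp only [hg, norm_div]
    rw [div_lt_one hb]
    exact this
  have hw0' : ‖w0‖ = 1 := by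
    rw [mem_sphere_iff_norm, sub_zero] at hw0
    exact hw0
  have hC : ‖g w0‖ < 1 := habs_sphere w0 hw0'
  have hle : ‖g z‖ ≤ ‖g w0‖ := by
    refine Complex.norm_le_of_forall_mem_frontier_norm_le isBounded_ball hgd ?_ ?_
    · intro x hx
      rw [frontier_ball (0:ℂ) one_ne_zero] at hx
      exact hmax hx
    · rw [closure_ball (0:ℂ) one_ne_zero, Metric.mem_closedBall, dist_zero_right]
      exact hz
  have hgz : ‖g z‖ < 1 := lt_of_le_of_lt hle hC
  have hbz := hBpos k z hz
  have : ‖Bt k z‖ / ‖B k z‖ < 1 := by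
    simpa [hg, norm_div] using hgz
  exact (div_lt_one hbz).mp this
end

section
/- Let γ = (γ₀,…,γₙ) with all |γ_ℓ| < 1 and let A_n, B_n, Ãₙ, B̃ₙ be the associated Schur polynomials. For ε with |ε| = 1, define ω_{γ,ε}(z) = (ε z Ãₙ(z) + B̃ₙ(z))/(ε z Aₙ(z) + Bₙ(z)). Then ω_{γ,ε} is analytic on a neighborhood of the closed unit disk and maps the unit circle into the unit circle (i.e., ω_{γ,ε} is a finite Blaschke product). -/
open Complex Metric Set Finset

private lemma aux_mobius10 {g a b : ℂ} (hg : ‖g‖ < 1)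
    (hab : ‖a‖ < ‖b‖) :
    ‖a + (starRingEnd ℂ) g * b‖ < ‖g * a + b‖ := by
  have h1 : Complex.normSq g < 1 := by
    rw [← Complex.sq_norm]; nlinarith [norm_nonneg g]
  have h2 : Complex.normSq a < Complex.normSq b := by
    rw [← Complex.sq_norm, ← Complex.sq_norm]
    nlinarith [norm_nonneg a, norm_nonneg b]
  have hid : Complex.normSq (g * a + b) - Complex.normSq (a + (starRingEnd ℂ) g * b)
      = (1 - Complex.normSq g) * (Complex.normSq b - Complex.normSq a) := by
    simp only [Complex.normSq_apply, Complex.add_re, Complex.add_im, Complex.mul_re,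
      Complex.mul_im, Complex.conj_re, Complex.conj_im]
    ring
  have hlt : Complex.normSq (a + (starRingEnd ℂ) g * b) < Complex.normSq (g * a + b) := by
    nlinarith
  rw [Complex.norm_def, Complex.norm_def]
  exact Real.sqrt_lt_sqrt (Complex.normSq_nonneg _) hlt

/-- For `|ε| = 1`, the function `ω_{γ,ε} = (ε z Ãₙ + B̃ₙ)/(ε z Aₙ + Bₙ)` is
analytic on a neighborhood of the closed unit disk and maps the unit circle
into the unit circle (it is a finite Blaschke product). -/
theorem stmt_10 (n : ℕ) (γ : ℕ → ℂ) (A B At Bt : ℕ → ℂ → ℂ)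
    (hA0 : ∀ z, A 0 z = (starRingEnd ℂ) (γ 0)) (hB0 : ∀ z, B 0 z = 1)
    (hAt0 : ∀ z, At 0 z = 1) (hBt0 : ∀ z, Bt 0 z = γ 0)
    (hA : ∀ k z, A (k + 1) z = z * A k z + (starRingEnd ℂ) (γ (k + 1)) * B k z)
    (hB : ∀ k z, B (k + 1) z = γ (k + 1) * z * A k z + B k z)
    (hAt : ∀ k z, At (k + 1) z = z * At k z + (starRingEnd ℂ) (γ (k + 1)) * Bt k z)
    (hBt : ∀ k z, Bt (k + 1) z = γ (k + 1) * z * At k z + Bt k z)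
    (hγ : ∀ l, ‖γ l‖ < 1)
    (ε : ℂ) (hε : ‖ε‖ = 1) :
    (∃ U : Set ℂ, IsOpen U ∧ Metric.closedBall (0 : ℂ) 1 ⊆ U ∧
      DifferentiableOn ℂ
        (fun z => (ε * z * At n z + Bt n z) / (ε * z * A n z + B n z)) U) ∧
    ∀ z : ℂ, ‖z‖ = 1 →
      ‖(ε * z * At n z + Bt n z) / (ε * z * A n z + B n z)‖ = 1 := by
  -- differentiability of A, B
  have hdAB : ∀ k, Differentiable ℂ (A k) ∧ Differentiable ℂ (B k) := by
    intro k
    induction k with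
    | zero =>
      constructor
      · rw [funext hA0]; exact differentiable_const _
      · rw [funext hB0]; exact differentiable_const _
    | succ k ih =>
      constructor
      · rw [funext (hA k)]
        exact (differentiable_id.mul ih.1).add (ih.2.const_mul _)
      · rw [funext (hB k)]
        exact (((differentiable_const _).mul differentiable_id).mul ih.1).add ih.2
  have hdAtBt : ∀ k, Differentiable ℂ (At k) ∧ Differentiable ℂ (Bt k) := by
    intro k
    induction k with
    | zero =>
      constructor
      · rw [funext hAt0]; exact differentiable_const _
      · rw [funext hBt0]; exact differentiable_const _
    | succ k ih =>
      constructor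
      · rw [funext (hAt k)]
        exact (differentiable_id.mul ih.1).add (ih.2.const_mul _)
      · rw [funext (hBt k)]
        exact (((differentiable_const _).mul differentiable_id).mul ih.1).add ih.2
  -- key strict inequality on the closed disk
  have key : ∀ k, ∀ z : ℂ, ‖z‖ ≤ 1 →
      ‖z * A k z‖ < ‖B k z‖ := by
    intro k
    induction k with
    | zero =>
      intro z hz
      rw [hA0, hB0, norm_mul, norm_one, Complex.norm_conj]
      nlinarith [norm_nonneg (γ 0), hγ 0, norm_nonneg z]
    | succ k ih =>
      intro z hz
      have h2 := aux_mobius10 (hγ (k + 1)) (ih z hz)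
      have e1 : ‖z * A (k + 1) z‖
          = ‖z‖ * ‖z * A k z + (starRingEnd ℂ) (γ (k + 1)) * B k z‖ := by
        rw [hA k z, norm_mul]
      have e2 : ‖B (k + 1) z‖
          = ‖γ (k + 1) * (z * A k z) + B k z‖ := by
        rw [hB k z, mul_assoc]
      rw [e1, e2]
      nlinarith [norm_nonneg (z * A k z + (starRingEnd ℂ) (γ (k + 1)) * B k z)]
  -- denominator nonzero on the closed disk
  have hden : ∀ z : ℂ, ‖z‖ ≤ 1 → ε * z * A n z + B n z ≠ 0 := by
    intro z hz h0
    have h1 : B n z = -(ε * z * A n z) := by linear_combination h0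
    have h2 : ‖B n z‖ = ‖z * A n z‖ := by
      rw [h1, norm_neg, mul_assoc, norm_mul, hε, one_mul]
    exact absurd h2 (ne_of_gt (key n z hz))
  -- relation on the unit circle
  have hcirc : ∀ k, ∀ z : ℂ, ‖z‖ = 1 →
      At k z = z ^ k * (starRingEnd ℂ) (B k z) ∧
      Bt k z = z ^ k * (starRingEnd ℂ) (A k z) := by
    intro k
    induction k with
    | zero =>
      intro z hz
      rw [hAt0, hBt0, hA0, hB0]
      simp
    | succ k ih =>
      intro z hz
      obtain ⟨h1, h2⟩ := ih z hz
      have hmul : z * (starRingEnd ℂ) z = 1 := by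
        rw [Complex.mul_conj, Complex.normSq_eq_norm_sq, hz]; norm_num
      constructor
      · rw [hAt k z, h1, h2, hB k z]
        simp only [map_add, map_mul]
        linear_combination (-(z ^ k) * (starRingEnd ℂ) (γ (k + 1)) *
          (starRingEnd ℂ) (A k z)) * hmul
      · rw [hBt k z, h1, h2, hA k z]
        simp only [map_add, map_mul, Complex.conj_conj]
        linear_combination (-(z ^ k) * (starRingEnd ℂ) (A k z)) * hmul
  have hcont : Continuous (fun z : ℂ => ε * z * A n z + B n z) :=
    ((((continuous_const.mul continuous_id).mul (hdAB n).1.continuous)).add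
      (hdAB n).2.continuous)
  refine ⟨⟨{z : ℂ | ε * z * A n z + B n z ≠ 0}, ?_, ?_, ?_⟩, ?_⟩
  · exact isOpen_compl_singleton.preimage hcont
  · intro z hz
    exact hden z (by simpa [Metric.mem_closedBall, Complex.dist_eq] using hz)
  · intro z hz
    exact (DifferentiableAt.div
      ((((differentiableAt_const _).mul differentiableAt_id).mul
        ((hdAtBt n).1 z)).add ((hdAtBt n).2 z))
      ((((differentiableAt_const ε).mul differentiableAt_id).mul
        ((hdAB n).1 z)).add ((hdAB n).2 z)) hz).differentiableWithinAt
  · intro z hz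
    have hne := hden z hz.le
    obtain ⟨h1, h2⟩ := hcirc n z hz
    have hmulz : z * (starRingEnd ℂ) z = 1 := by
      rw [Complex.mul_conj, Complex.normSq_eq_norm_sq, hz]; norm_num
    have hmule : ε * (starRingEnd ℂ) ε = 1 := by
      rw [Complex.mul_conj, Complex.normSq_eq_norm_sq, hε]; norm_num
    have hfac : ε * z * At n z + Bt n z
        = z ^ n * (ε * z * (starRingEnd ℂ) (B n z) + (starRingEnd ℂ) (A n z)) := by
      rw [h1, h2]; ring
    have hkey : (starRingEnd ℂ) ε * (starRingEnd ℂ) z * (ε * z * A n z + B n z)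
        = (starRingEnd ℂ) (ε * z * (starRingEnd ℂ) (B n z) + (starRingEnd ℂ) (A n z)) := by
      simp only [map_add, map_mul, Complex.conj_conj]
      linear_combination (A n z * ε * (starRingEnd ℂ) ε) * hmulz + A n z * hmule
    have habs : ‖ε * z * (starRingEnd ℂ) (B n z) + (starRingEnd ℂ) (A n z)‖
        = ‖ε * z * A n z + B n z‖ := by
      rw [← Complex.norm_conj, ← hkey, norm_mul, norm_mul, Complex.norm_conj,
        Complex.norm_conj, hε, hz, one_mul, one_mul]
    rw [norm_div, hfac, norm_mul, norm_pow, hz, one_pow, one_mul, habs,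
      div_self (norm_ne_zero_iff.mpr hne)]
end

section
/- Let γ = (γ₀,…,γₙ) with all |γ_ℓ| < 1, and let A_n, B_n, Ãₙ, B̃ₙ be the Schur polynomials. For z ∈ 𝔻 define ρ(z) = (conj(Bₙ(z)) B̃ₙ(z) − |z|² conj(Aₙ(z)) Ãₙ(z)) / (|Bₙ(z)|² − |z|² |Aₙ(z)|²) and r(z) = |z|^{n+1} ∏_{ℓ=0}^{n} (1 − |γ_ℓ|²) / (|Bₙ(z)|² − |z|² |Aₙ(z)|²). Then for any analytic ω : 𝔻 → 𝔻̄ of the form ω(z) = (z Ãₙ(z) ω*(z) + B̃ₙ(z))/(z Aₙ(z) ω*(z) + Bₙ(z)) with ω* : 𝔻 → 𝔻̄ analytic, one has |ω(z) − ρ(z)| ≤ r(z) for all z ∈ 𝔻. -/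
open Complex Metric Set Finset

lemma aux_normSq_step (aa bb z g : ℂ) :
    Complex.normSq (g*z*aa + bb) - Complex.normSq z * Complex.normSq (z*aa + (starRingEnd ℂ) g * bb)
      = (1 - Complex.normSq z) * Complex.normSq (g*z*aa + bb)
        + Complex.normSq z * (1 - Complex.normSq g) *
          (Complex.normSq bb - Complex.normSq z * Complex.normSq aa) := by
  apply Complex.ofReal_injective
  push_cast
  simp only [← Complex.mul_conj]
  simp only [map_add, map_mul, Complex.conj_conj]
  ring

lemma aux_normSq_w (a b w : ℂ) :
    Complex.normSq (w*a + b) - Complex.normSq ((starRingEnd ℂ) w * b + a)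
      = (1 - Complex.normSq w) * (Complex.normSq b - Complex.normSq a) := by
  apply Complex.ofReal_injective
  push_cast
  simp only [← Complex.mul_conj]
  simp only [map_add, map_mul, Complex.conj_conj]
  ring

/-- The Schur value-region: any `ω` of the form
`ω = (z Ãₙ ω* + B̃ₙ)/(z Aₙ ω* + Bₙ)` with `ω* : 𝔻 → 𝔻̄` analytic satisfies
`|ω(z) − ρ(z)| ≤ r(z)` on `𝔻`, where `ρ` and `r` are the center and radius
functions. -/
theorem stmt_15 (n : ℕ) (γ : ℕ → ℂ) (A B At Bt : ℕ → ℂ → ℂ)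
    (hA0 : ∀ z, A 0 z = (starRingEnd ℂ) (γ 0)) (hB0 : ∀ z, B 0 z = 1)
    (hAt0 : ∀ z, At 0 z = 1) (hBt0 : ∀ z, Bt 0 z = γ 0)
    (hA : ∀ k z, A (k + 1) z = z * A k z + (starRingEnd ℂ) (γ (k + 1)) * B k z)
    (hB : ∀ k z, B (k + 1) z = γ (k + 1) * z * A k z + B k z)
    (hAt : ∀ k z, At (k + 1) z = z * At k z + (starRingEnd ℂ) (γ (k + 1)) * Bt k z)
    (hBt : ∀ k z, Bt (k + 1) z = γ (k + 1) * z * At k z + Bt k z)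
    (hγ : ∀ l, ‖γ l‖ < 1)
    (ωs : ℂ → ℂ) (hωs : DifferentiableOn ℂ ωs (Metric.ball 0 1))
    (hωsb : ∀ z ∈ Metric.ball (0 : ℂ) 1, ‖ωs z‖ ≤ 1) :
    ∀ z ∈ Metric.ball (0 : ℂ) 1,
      ‖((z * At n z * ωs z + Bt n z) / (z * A n z * ωs z + B n z) -
            ((starRingEnd ℂ) (B n z) * Bt n z -
                ((‖z‖ : ℝ) : ℂ) ^ 2 * (starRingEnd ℂ) (A n z) * At n z) /
              (((‖B n z‖ ^ 2 - ‖z‖ ^ 2 * ‖A n z‖ ^ 2 : ℝ)) : ℂ))‖ ≤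
        ‖z‖ ^ (n + 1) *
            (∏ l ∈ Finset.range (n + 1), (1 - ‖γ l‖ ^ 2)) /
          (‖B n z‖ ^ 2 - ‖z‖ ^ 2 * ‖A n z‖ ^ 2) := by
  intro z hz
  have hcast : ∀ x : ℂ, ((‖x‖ : ℝ) : ℂ) ^ 2 = x * (starRingEnd ℂ) x := fun x => by
    rw [Complex.mul_conj, ← Complex.sq_norm]; push_cast; ring
  have hz1 : ‖z‖ < 1 := by simpa [Metric.mem_ball, dist_zero_right] using hz
  have hnz : Complex.normSq z < 1 := by
    rw [← Complex.sq_norm]; nlinarith [norm_nonneg z]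
  have hnγ : ∀ l, Complex.normSq (γ l) < 1 := by
    intro l; rw [← Complex.sq_norm]; nlinarith [norm_nonneg (γ l), hγ l]
  -- positivity of the "denominator" D_k
  have hDpos : ∀ k, 0 < Complex.normSq (B k z) - Complex.normSq z * Complex.normSq (A k z) := by
    intro k
    induction k with
    | zero =>
        rw [hA0, hB0]
        simp only [Complex.normSq_conj, Complex.normSq_one]
        nlinarith [Complex.normSq_nonneg z, Complex.normSq_nonneg (γ 0), hnz, hnγ 0]
    | succ k ih =>
        rw [hA k z, hB k z, aux_normSq_step]
        rcases eq_or_ne z 0 with rfl | hz0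
        · simpa using ih
        · have h1 : 0 < Complex.normSq z := Complex.normSq_pos.mpr hz0
          have h2 : 0 < 1 - Complex.normSq (γ (k+1)) := by linarith [hnγ (k+1)]
          have h3 : (0:ℝ) ≤ (1 - Complex.normSq z) *
              Complex.normSq (γ (k+1)*z*(A k z) + B k z) :=
            mul_nonneg (by linarith) (Complex.normSq_nonneg _)
          nlinarith [mul_pos (mul_pos h1 h2) ih]
  -- determinant identity
  have hdet : ∀ k, At k z * B k z - A k z * Bt k z
      = z ^ k * ∏ l ∈ Finset.range (k+1), (((1 - ‖γ l‖ ^ 2 : ℝ)) : ℂ) := by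
    intro k
    induction k with
    | zero =>
        rw [hAt0, hB0, hA0, hBt0]
        rw [Finset.prod_range_one]
        push_cast
        rw [hcast (γ 0)]
        ring
    | succ k ih =>
        rw [hAt, hB, hA, hBt, Finset.prod_range_succ]
        have hg : (((1 - ‖γ (k+1)‖ ^ 2 : ℝ)) : ℂ)
            = 1 - γ (k+1) * (starRingEnd ℂ) (γ (k+1)) := by
          push_cast
          rw [hcast (γ (k+1))]
        rw [hg]
        linear_combination (z * (1 - γ (k+1) * (starRingEnd ℂ) (γ (k+1)))) * ih
  set w := ωs z with hwdef
  have hw1 : ‖w‖ ≤ 1 := hωsb z hz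
  set a := A n z
  set b := B n z
  set at' := At n z
  set bt' := Bt n z
  set D : ℝ := ‖b‖ ^ 2 - ‖z‖ ^ 2 * ‖a‖ ^ 2 with hDdef
  have hD : 0 < D := by
    have := hDpos n
    rw [hDdef, Complex.sq_norm, Complex.sq_norm, Complex.sq_norm]
    exact this
  have hDne : ((D : ℝ) : ℂ) ≠ 0 := Complex.ofReal_ne_zero.mpr (ne_of_gt hD)
  have hDc : ((D : ℝ) : ℂ) = b * (starRingEnd ℂ) b - z * (starRingEnd ℂ) z * (a * (starRingEnd ℂ) a) := by
    rw [hDdef]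
    push_cast
    rw [hcast, hcast, hcast]
  -- the denominator is nonzero
  have hba : ‖z * a‖ < ‖b‖ := by
    apply lt_of_pow_lt_pow_left₀ 2 (norm_nonneg b)
    rw [Complex.sq_norm, Complex.sq_norm, Complex.normSq_mul]
    linarith [hDpos n]
  have hY : ‖z * a * w + b‖ ≠ 0 := by
    have h1 : ‖z * a * w‖ < ‖b‖ := by
      rw [norm_mul]
      calc ‖z * a‖ * ‖w‖ ≤ ‖z * a‖ * 1 :=
            mul_le_mul_of_nonneg_left hw1 (norm_nonneg _)
        _ = ‖z * a‖ := mul_one _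
        _ < ‖b‖ := hba
    intro h
    have h0 : z * a * w + b = 0 := norm_eq_zero.mp h
    have : b = -(z * a * w) := by linear_combination h0
    rw [this, norm_neg] at h1
    exact lt_irrefl _ h1
  have hYne : z * a * w + b ≠ 0 := fun h => hY (by rw [h, norm_zero])
  have habs2 : ((‖z‖ : ℝ) : ℂ) ^ 2 = z * (starRingEnd ℂ) z := hcast z
  -- main algebraic identity
  have hmain : (z * at' * w + bt') / (z * a * w + b) -
      ((starRingEnd ℂ) b * bt' - ((‖z‖ : ℝ) : ℂ) ^ 2 * (starRingEnd ℂ) a * at') /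
        ((D : ℝ) : ℂ)
      = (at' * b - a * bt') * z * (w * (starRingEnd ℂ) b + (starRingEnd ℂ) z * (starRingEnd ℂ) a) /
        (((D : ℝ) : ℂ) * (z * a * w + b)) := by
    rw [habs2, hDc]
    have hDne' : b * (starRingEnd ℂ) b - z * (starRingEnd ℂ) z * (a * (starRingEnd ℂ) a) ≠ 0 := by
      rw [← hDc]; exact hDne
    rw [div_sub_div _ _ hYne hDne', div_eq_div_iff (mul_ne_zero hYne hDne') (mul_ne_zero hDne' hYne)]
    ring
  rw [hmain]
  -- compute the absolute value
  have hP : ‖∏ l ∈ Finset.range (n+1), (((1 - ‖γ l‖ ^ 2 : ℝ)) : ℂ)‖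
      = ∏ l ∈ Finset.range (n+1), (1 - ‖γ l‖ ^ 2) := by
    rw [norm_prod]
    refine Finset.prod_congr rfl fun l _ => ?_
    rw [Complex.norm_real, Real.norm_eq_abs, _root_.abs_of_nonneg]
    nlinarith [hγ l, norm_nonneg (γ l)]
  have hXY : ‖w * (starRingEnd ℂ) b + (starRingEnd ℂ) z * (starRingEnd ℂ) a‖
      ≤ ‖z * a * w + b‖ := by
    have h1 : ‖w * (starRingEnd ℂ) b + (starRingEnd ℂ) z * (starRingEnd ℂ) a‖
        = ‖(starRingEnd ℂ) w * b + z * a‖ := by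
      rw [← Complex.norm_conj]
      simp only [map_add, map_mul, Complex.conj_conj]
    rw [h1]
    have h2 : z * a * w + b = w * (z * a) + b := by ring
    rw [h2]
    rw [Complex.norm_def, Complex.norm_def]
    apply Real.sqrt_le_sqrt
    have h3 := aux_normSq_w (z * a) b w
    have h4 : 0 ≤ 1 - Complex.normSq w := by
      rw [← Complex.sq_norm]; nlinarith [norm_nonneg w]
    have h5 : 0 ≤ Complex.normSq b - Complex.normSq (z * a) := by
      rw [Complex.normSq_mul]; linarith [hDpos n]
    nlinarith
  have hPpos : 0 ≤ ∏ l ∈ Finset.range (n+1), (1 - ‖γ l‖ ^ 2) := by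
    apply Finset.prod_nonneg
    intro l _
    nlinarith [hγ l, norm_nonneg (γ l)]
  rw [norm_div, norm_mul, norm_mul, hdet n, norm_mul, hP, norm_mul, Complex.norm_real, Real.norm_eq_abs,
    _root_.abs_of_nonneg hD.le, norm_pow]
  have hYpos : 0 < ‖z * a * w + b‖ := lt_of_le_of_ne (norm_nonneg _) (Ne.symm hY)
  calc ‖z‖ ^ n * (∏ l ∈ Finset.range (n+1), (1 - ‖γ l‖ ^ 2)) *
        ‖z‖ *
        ‖w * (starRingEnd ℂ) b + (starRingEnd ℂ) z * (starRingEnd ℂ) a‖ /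
        (D * ‖z * a * w + b‖)
      ≤ ‖z‖ ^ n * (∏ l ∈ Finset.range (n+1), (1 - ‖γ l‖ ^ 2)) *
        ‖z‖ * ‖z * a * w + b‖ / (D * ‖z * a * w + b‖) := by
        gcongr
    _ = ‖z‖ ^ (n + 1) * (∏ l ∈ Finset.range (n+1), (1 - ‖γ l‖ ^ 2)) / D := by
        rw [mul_div_mul_right _ _ (ne_of_gt hYpos)]
        rw [pow_succ]
        ring
end

section
/- Let γ = (γ₀,…,γₙ) with all |γ_ℓ| < 1, let ε ∈ ℂ with |ε| = 1, and define ω_{γ,ε}(z) = (ε z Ãₙ(z) + B̃ₙ(z))/(ε z Aₙ(z) + Bₙ(z)). Then for all z ∈ 𝔻: ω_{γ,ε}(z) − ρ(z) = ∏_{ℓ=0}^{n}(1 − |γ_ℓ|²) · |Bₙ(z) + ε z Aₙ(z)|² / (|Bₙ(z)|² − |z|² |Aₙ(z)|²) · ε z^{n+1} / (Bₙ(z) + ε z Aₙ(z))². In particular |ω_{γ,ε}(z) − ρ(z)| = r(z), where ρ and r are the center and radius functions of the Schur value region. -/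
open Complex Metric Set Finset

/-- The extremal functions `ω_{γ,ε}` (with `|ε| = 1`) attain the boundary of
the Schur value-region: `ω_{γ,ε}(z) − ρ(z)` has the stated explicit form and
in particular `|ω_{γ,ε}(z) − ρ(z)| = r(z)` on `𝔻`. -/
theorem stmt_16 (n : ℕ) (γ : ℕ → ℂ) (A B At Bt : ℕ → ℂ → ℂ)
    (hA0 : ∀ z, A 0 z = (starRingEnd ℂ) (γ 0)) (hB0 : ∀ z, B 0 z = 1)
    (hAt0 : ∀ z, At 0 z = 1) (hBt0 : ∀ z, Bt 0 z = γ 0)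
    (hA : ∀ k z, A (k + 1) z = z * A k z + (starRingEnd ℂ) (γ (k + 1)) * B k z)
    (hB : ∀ k z, B (k + 1) z = γ (k + 1) * z * A k z + B k z)
    (hAt : ∀ k z, At (k + 1) z = z * At k z + (starRingEnd ℂ) (γ (k + 1)) * Bt k z)
    (hBt : ∀ k z, Bt (k + 1) z = γ (k + 1) * z * At k z + Bt k z)
    (hγ : ∀ l, ‖(γ l)‖ < 1)
    (ε : ℂ) (hε : ‖ε‖ = 1) :
    ∀ z ∈ Metric.ball (0 : ℂ) 1,
      (ε * z * At n z + Bt n z) / (ε * z * A n z + B n z) -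
          ((starRingEnd ℂ) (B n z) * Bt n z -
              ((‖z‖ : ℝ) : ℂ) ^ 2 * (starRingEnd ℂ) (A n z) * At n z) /
            (((‖(B n z)‖ ^ 2 - ‖z‖ ^ 2 * ‖(A n z)‖ ^ 2 : ℝ)) : ℂ) =
        (((∏ l ∈ Finset.range (n + 1), (1 - ‖(γ l)‖ ^ 2) : ℝ)) : ℂ) *
            (((‖(B n z + ε * z * A n z)‖ ^ 2 : ℝ)) : ℂ) /
            (((‖(B n z)‖ ^ 2 - ‖z‖ ^ 2 * ‖(A n z)‖ ^ 2 : ℝ)) : ℂ) *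
            (ε * z ^ (n + 1) / (B n z + ε * z * A n z) ^ 2) ∧
      ‖((ε * z * At n z + Bt n z) / (ε * z * A n z + B n z) -
            ((starRingEnd ℂ) (B n z) * Bt n z -
                ((‖z‖ : ℝ) : ℂ) ^ 2 * (starRingEnd ℂ) (A n z) * At n z) /
              (((‖(B n z)‖ ^ 2 - ‖z‖ ^ 2 * ‖(A n z)‖ ^ 2 : ℝ)) : ℂ))‖ =
        ‖z‖ ^ (n + 1) *
            (∏ l ∈ Finset.range (n + 1), (1 - ‖(γ l)‖ ^ 2)) /
          (‖(B n z)‖ ^ 2 - ‖z‖ ^ 2 * ‖(A n z)‖ ^ 2) := by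
  have hcoe : ∀ w : ℂ, ((‖w‖ : ℝ) : ℂ) ^ 2 = w * (starRingEnd ℂ) w := by
    intro w
    rw [← Complex.ofReal_pow, Complex.sq_norm]
    exact (Complex.mul_conj w).symm
  -- Wronskian identity
  have hW : ∀ m, ∀ z : ℂ, At m z * B m z - A m z * Bt m z
      = z ^ m * ((∏ l ∈ Finset.range (m+1), (1 - ‖(γ l)‖ ^ 2) : ℝ) : ℂ) := by
    intro m
    induction m with
    | zero =>
      intro z
      rw [hA0, hB0, hAt0, hBt0, Finset.prod_range_one]
      push_cast
      linear_combination hcoe (γ 0)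
    | succ k ih =>
      intro z
      rw [hA, hB, hAt, hBt, Finset.prod_range_succ]
      push_cast
      have ihz := ih z
      push_cast at ihz
      linear_combination z * (1 - γ (k+1) * (starRingEnd ℂ) (γ (k+1))) * ihz
        + z^(k+1) * (∏ l ∈ Finset.range (k+1), (1 - ((‖(γ l)‖ : ℝ) : ℂ) ^ 2)) * hcoe (γ (k+1))
  -- positivity of the denominator on the disk
  have hDpos : ∀ m, ∀ z : ℂ, ‖z‖ < 1 →
      0 < ‖(B m z)‖ ^ 2 - ‖z‖ ^ 2 * ‖(A m z)‖ ^ 2 := by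
    intro m
    induction m with
    | zero =>
      intro z hz
      rw [hA0, hB0]
      simp only [map_one, Complex.norm_conj, norm_one]
      have hz2 : ‖z‖ ^ 2 < 1 := by
        have := norm_nonneg z; nlinarith
      have hg2 : ‖(γ 0)‖ ^ 2 < 1 := by
        have := norm_nonneg (γ 0); have := hγ 0; nlinarith
      have := sq_nonneg (‖z‖)
      have := sq_nonneg (‖(γ 0)‖)
      nlinarith
    | succ k ih =>
      intro z hz
      have hid : ‖(B (k+1) z)‖ ^ 2 - ‖z‖ ^ 2 * ‖(A (k+1) z)‖ ^ 2
          = (1 - ‖(γ (k+1))‖ ^ 2) *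
              (‖(B k z)‖ ^ 2 - ‖z‖ ^ 2 * ‖(A k z)‖ ^ 2)
            + (1 - ‖z‖ ^ 2) * ‖(A (k+1) z)‖ ^ 2 := by
        have : ((‖(B (k+1) z)‖ ^ 2 - ‖z‖ ^ 2 * ‖(A (k+1) z)‖ ^ 2 : ℝ) : ℂ)
            = (((1 - ‖(γ (k+1))‖ ^ 2) *
              (‖(B k z)‖ ^ 2 - ‖z‖ ^ 2 * ‖(A k z)‖ ^ 2)
            + (1 - ‖z‖ ^ 2) * ‖(A (k+1) z)‖ ^ 2 : ℝ) : ℂ) := by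
          push_cast
          rw [hcoe, hcoe, hcoe, hcoe, hcoe, hcoe]
          rw [hA, hB]
          simp only [map_add, map_mul, Complex.conj_conj]
          ring
        exact_mod_cast this
      have hk := ih z hz
      rw [hid]
      have hg2 : 0 < 1 - ‖(γ (k+1))‖ ^ 2 := by
        have := norm_nonneg (γ (k+1)); have := hγ (k+1); nlinarith
      have hz2 : 0 ≤ 1 - ‖z‖ ^ 2 := by
        have := norm_nonneg z; nlinarith
      have := sq_nonneg (‖(A (k+1) z)‖)
      nlinarith
  intro z hz
  have hz' : ‖z‖ < 1 := by
    simpa [Complex.dist_eq] using hz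
  have hDp := hDpos n z hz'
  have hDne : ((‖(B n z)‖ ^ 2 - ‖z‖ ^ 2 * ‖(A n z)‖ ^ 2 : ℝ) : ℂ) ≠ 0 := by
    exact_mod_cast ne_of_gt hDp
  have hPpos : 0 < ∏ l ∈ Finset.range (n + 1), (1 - ‖(γ l)‖ ^ 2) := by
    apply Finset.prod_pos
    intro l _
    have := norm_nonneg (γ l); have := hγ l; nlinarith
  -- the denominator B + ε z A is nonzero
  have hw : B n z + ε * z * A n z ≠ 0 := by
    intro h
    have hB' : B n z = -(ε * z * A n z) := by linear_combination h
    have habs : ‖(B n z)‖ = ‖z‖ * ‖(A n z)‖ := by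
      rw [hB']
      simp [norm_mul, hε]
    rw [habs] at hDp
    nlinarith [sq_nonneg (‖z‖ * ‖(A n z)‖)]
  have hw' : ε * z * A n z + B n z ≠ 0 := by
    rw [add_comm]; exact hw
  have hε' : ε * (starRingEnd ℂ) ε = 1 := by
    have hns : Complex.normSq ε = 1 := by
      rw [← Complex.sq_norm, hε]; norm_num
    rw [Complex.mul_conj, hns, Complex.ofReal_one]
  have hDc : ((‖(B n z)‖ ^ 2 - ‖z‖ ^ 2 * ‖(A n z)‖ ^ 2 : ℝ) : ℂ)
      = B n z * (starRingEnd ℂ) (B n z) - (z * (starRingEnd ℂ) z) * (A n z * (starRingEnd ℂ) (A n z)) := by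
    push_cast
    rw [hcoe, hcoe, hcoe]
  set P : ℝ := ∏ l ∈ Finset.range (n + 1), (1 - ‖(γ l)‖ ^ 2) with hP
  have hWn := hW n z
  -- the key polynomial identity
  have key : (ε * z * At n z + Bt n z) *
        ((‖(B n z)‖ ^ 2 - ‖z‖ ^ 2 * ‖(A n z)‖ ^ 2 : ℝ) : ℂ)
      - ((starRingEnd ℂ) (B n z) * Bt n z -
          (z * (starRingEnd ℂ) z) * (starRingEnd ℂ) (A n z) * At n z) * (B n z + ε * z * A n z)
      = ε * z ^ (n+1) * (P : ℂ) * (starRingEnd ℂ) (B n z + ε * z * A n z) := by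
    simp only [map_add, map_mul]
    linear_combination (ε * z * (starRingEnd ℂ) (B n z)
        + z * (starRingEnd ℂ) z * (starRingEnd ℂ) (A n z)) * hWn
      - z^(n+1) * (P : ℂ) * (starRingEnd ℂ) z * (starRingEnd ℂ) (A n z) * hε'
      + (ε * z * At n z + Bt n z) * hDc
  have main : (ε * z * At n z + Bt n z) / (ε * z * A n z + B n z) -
          ((starRingEnd ℂ) (B n z) * Bt n z -
              ((‖z‖ : ℝ) : ℂ) ^ 2 * (starRingEnd ℂ) (A n z) * At n z) /
            (((‖(B n z)‖ ^ 2 - ‖z‖ ^ 2 * ‖(A n z)‖ ^ 2 : ℝ)) : ℂ) =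
        ((P : ℝ) : ℂ) *
            (((‖(B n z + ε * z * A n z)‖ ^ 2 : ℝ)) : ℂ) /
            (((‖(B n z)‖ ^ 2 - ‖z‖ ^ 2 * ‖(A n z)‖ ^ 2 : ℝ)) : ℂ) *
            (ε * z ^ (n + 1) / (B n z + ε * z * A n z) ^ 2) := by
    have hcoe2 : ((‖(B n z + ε * z * A n z)‖ ^ 2 : ℝ) : ℂ)
        = (B n z + ε * z * A n z) * (starRingEnd ℂ) (B n z + ε * z * A n z) := by
      push_cast; rw [hcoe]
    rw [hcoe z, hcoe2]
    rw [add_comm (ε * z * A n z) (B n z)]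
    have h2 : (B n z + ε * z * A n z) ^ 2 ≠ 0 := pow_ne_zero 2 hw
    rw [div_sub_div _ _ hw hDne, div_mul_div_comm,
      div_eq_div_iff (mul_ne_zero hw hDne) (mul_ne_zero hDne h2)]
    linear_combination (((‖(B n z)‖ ^ 2 - ‖z‖ ^ 2 * ‖(A n z)‖ ^ 2 : ℝ) : ℂ)
      * (B n z + ε * z * A n z) ^ 2) * key
  refine ⟨main, ?_⟩
  rw [main]
  have hwabs : ‖(B n z + ε * z * A n z)‖ ≠ 0 := by
    simpa using hw
  simp only [norm_mul, norm_div, norm_pow, Complex.norm_real, Real.norm_eq_abs, hε]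
  rw [abs_of_pos hPpos, abs_of_pos hDp, abs_norm]
  field_simp
end

section
/- Let η₁,…,η_m be points on the unit circle, β₁,…,β_m ∈ (0, 2] with ∑ βᵢ = 2, and for each i let z_{i1},…,z_{i p_i} be points outside the closed unit disk (|z_{iℓ}| > 1), with 0 ≤ p_i ≤ n + 1. Let h be analytic on 𝔻 with h'(z) = z^{n+j+1} / ∏_{i=1}^{m} ((1 − η_i γ₀) ∏_{ℓ=1}^{p_i} (1 − z/z_{iℓ}))^{β_i} for some j ≥ −1 and constant γ₀ with |γ₀| < 1 (branches chosen so h' is analytic and nonzero away from 0). Then Re(1 + z h''(z)/h'(z)) > 0 for all z ∈ 𝔻. -/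
open Complex Metric Set Finset

lemma prod_log_deriv {ι : Type*} (s : Finset ι) (f : ι → ℂ → ℂ) (g : ι → ℂ) (x : ℂ)
    (hf : ∀ i ∈ s, HasDerivAt (f i) (f i x * g i) x) :
    HasDerivAt (fun y => ∏ i ∈ s, f i y) ((∏ i ∈ s, f i x) * ∑ i ∈ s, g i) x := by
  induction s using Finset.cons_induction with
  | empty => simpa using hasDerivAt_const x (1:ℂ)
  | cons a s ha ih =>
    simp only [Finset.prod_cons, Finset.sum_cons]
    have h1 := hf a (Finset.mem_cons_self a s)
    have h2 := ih (fun i hi => hf i (Finset.mem_cons_of_mem hi))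
    have h3 := h1.fun_mul h2
    exact h3.congr_deriv (by ring)

lemma re_w_div (w : ℂ) (hw : ‖w‖ < 1) : -(1/2) < (w / (1 - w)).re := by
  have h1 : (1 - w) ≠ 0 := by
    intro h
    have : w = 1 := by linear_combination -h
    simp [this] at hw
  have h3 : 0 < Complex.normSq (1 - w) := Complex.normSq_pos.mpr h1
  have h4 : w.re^2 + w.im^2 < 1 := by
    have h5 := Complex.sq_norm w
    rw [Complex.normSq_apply] at h5
    nlinarith [norm_nonneg w]
  rw [Complex.div_re, Complex.normSq_apply] at *
  simp only [Complex.sub_re, Complex.sub_im, Complex.one_re, Complex.one_im] at *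
  rw [← add_div, neg_lt, ← neg_div, div_lt_iff₀ h3]
  nlinarith


/-- Convexity of the extremal integrand: if `h' (z) = z^{n+j+1} / ∏ᵢ ((1−ηᵢγ₀)
∏ₗ (1−z/z_{iℓ}))^{βᵢ}` with `|ηᵢ| = 1`, `0 < βᵢ ≤ 2`, `∑ βᵢ = 2`, `pᵢ ≤ n+1`,
`|z_{iℓ}| > 1`, `j ≥ −1` and `|γ₀| < 1`, then `Re (1 + z h''(z)/h'(z)) > 0`
on `𝔻`. -/
theorem stmt_19 (n : ℕ) (j : ℤ) (hj : -1 ≤ j) (m : ℕ)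
    (η : Fin m → ℂ) (hη : ∀ i, ‖η i‖ = 1)
    (β : Fin m → ℝ) (hβ0 : ∀ i, 0 < β i) (hβ2 : ∀ i, β i ≤ 2)
    (hβsum : ∑ i, β i = 2)
    (p : Fin m → ℕ) (hp : ∀ i, p i ≤ n + 1)
    (zp : (i : Fin m) → Fin (p i) → ℂ) (hzp : ∀ i l, 1 < ‖zp i l‖)
    (γ₀ : ℂ) (hγ₀ : ‖γ₀‖ < 1)
    (h : ℂ → ℂ) (hh : DifferentiableOn ℂ h (Metric.ball 0 1))
    (hh' : ∀ z ∈ Metric.ball (0 : ℂ) 1, deriv h z =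
      z ^ ((n : ℤ) + j + 1) /
        ∏ i, ((1 - η i * γ₀) ^ ((β i : ℂ)) *
          ∏ l, (1 - z / zp i l) ^ ((β i : ℂ)))) :
    ∀ z ∈ Metric.ball (0 : ℂ) 1,
      0 < (1 + z * deriv (deriv h) z / deriv h z).re := by
  intro z hz
  rcases eq_or_ne z 0 with rfl | hz0
  · simp
  -- setup
  set k : ℕ := ((n : ℤ) + j + 1).toNat with hkdef
  have hk : ((k : ℤ)) = (n : ℤ) + j + 1 := Int.toNat_of_nonneg (by omega)
  set P : ℂ → ℂ := fun w => ∏ i, ((1 - η i * γ₀) ^ ((β i : ℂ)) *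
      ∏ l, (1 - w / zp i l) ^ ((β i : ℂ))) with hPdef
  set G : ℂ → ℂ := fun w => w ^ k / P w with hGdef
  have hzlt : ‖z‖ < 1 := by simpa [mem_ball, dist_eq] using hz
  -- deriv h = G on ball
  have hhG : ∀ w ∈ Metric.ball (0:ℂ) 1, deriv h w = G w := by
    intro w hw
    rw [hh' w hw, hGdef]
    simp only
    rw [← hk, zpow_natCast]
  -- basic nonvanishing facts at z
  have hwlt : ∀ i l, ‖z / zp i l‖ < 1 := by
    intro i l
    rw [norm_div]
    rw [div_lt_one (lt_trans one_pos (hzp i l))]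
    exact lt_trans hzlt (hzp i l)
  have huslit : ∀ i l, (1 - z / zp i l) ∈ Complex.slitPlane := by
    intro i l
    rw [Complex.mem_slitPlane_iff]
    left
    have h1 : (z / zp i l).re ≤ ‖z / zp i l‖ := Complex.re_le_norm _
    simp only [Complex.sub_re, Complex.one_re]
    linarith [hwlt i l]
  have hune : ∀ i l, (1 - z / zp i l) ≠ 0 := fun i l =>
    Complex.slitPlane_ne_zero (huslit i l)
  have hcne : ∀ i, (1 - η i * γ₀) ≠ 0 := by
    intro i h0
    have : η i * γ₀ = 1 := by linear_combination -h0
    have := congrArg norm this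
    rw [norm_mul, hη i, one_mul, norm_one] at this
    exact absurd this (ne_of_lt hγ₀)
  have hPz : P z ≠ 0 := by
    rw [hPdef]
    apply Finset.prod_ne_zero_iff.mpr
    intro i _
    apply mul_ne_zero
    · simp only [Ne, Complex.cpow_eq_zero_iff, not_and_or, not_not]
      left; exact hcne i
    · apply Finset.prod_ne_zero_iff.mpr
      intro l _
      simp only [Ne, Complex.cpow_eq_zero_iff, not_and_or, not_not]
      left; exact hune i l
  -- logarithmic derivative
  set D : ℂ := ∑ i, ∑ l, (β i : ℂ) * (-(zp i l)⁻¹) / (1 - z / zp i l) with hDdef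
  have hPderiv : HasDerivAt P (P z * D) z := by
    apply prod_log_deriv
    intro i _
    have hinner : HasDerivAt (fun w => ∏ l, (1 - w / zp i l) ^ ((β i : ℂ)))
        ((∏ l, (1 - z / zp i l) ^ ((β i : ℂ))) *
          ∑ l, (β i : ℂ) * (-(zp i l)⁻¹) / (1 - z / zp i l)) z := by
      apply prod_log_deriv
      intro l _
      have hu : HasDerivAt (fun w => 1 - w / zp i l) (-(zp i l)⁻¹) z := by
        simpa [one_div] using ((hasDerivAt_id z).div_const (zp i l)).const_sub 1
      have := hu.cpow_const (c := ((β i : ℂ))) (huslit i l)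
      convert this using 1
      rw [Complex.cpow_sub _ _ (hune i l), Complex.cpow_one]
      field_simp
    have := hinner.const_mul ((1 - η i * γ₀) ^ ((β i : ℂ)))
    exact this.congr_deriv (by ring)
  have hGderiv : HasDerivAt G
      ((((k : ℂ) * z ^ (k - 1)) * P z - z ^ k * (P z * D)) / P z ^ 2) z :=
    (hasDerivAt_pow k z).div hPderiv hPz
  -- deriv (deriv h) z = G' z
  have hdd : deriv (deriv h) z = (((k : ℂ) * z ^ (k - 1)) * P z - z ^ k * (P z * D)) / P z ^ 2 := by
    have hev : deriv h =ᶠ[nhds z] G :=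
      Filter.eventuallyEq_of_mem (isOpen_ball.mem_nhds hz) hhG
    rw [hev.deriv_eq]
    exact hGderiv.deriv
  -- the key algebraic identity
  have hGz : deriv h z = z ^ k / P z := hhG z hz
  have hzk : z ^ k ≠ 0 := pow_ne_zero k hz0
  have hkey : z * deriv (deriv h) z / deriv h z = (k : ℂ) - z * D := by
    rw [hdd, hGz]
    have hzz : (k : ℂ) * z ^ (k - 1) * z = (k : ℂ) * z ^ k := by
      cases k with
      | zero => simp
      | succ k2 => simp only [Nat.add_sub_cancel, pow_succ]; ring
    field_simp
    linear_combination hzz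
  rw [hkey]
  -- rewrite -z*D as a sum of nice terms
  set E : ℂ := ∑ i, ∑ l, (β i : ℂ) * ((z / zp i l) / (1 - z / zp i l)) with hEdef
  have hzD0 : z * D + E = 0 := by
    rw [hDdef, hEdef, Finset.mul_sum, ← Finset.sum_add_distrib]
    apply Finset.sum_eq_zero; intro i _
    rw [Finset.mul_sum, ← Finset.sum_add_distrib]
    apply Finset.sum_eq_zero; intro l _
    have hzpne : zp i l ≠ 0 := by
      intro h0
      have h1 := hzp i l
      rw [h0] at h1; simp at h1; linarith
    have habs : ‖z‖ < ‖zp i l‖ := lt_trans hzlt (hzp i l)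
    have hne2 : zp i l - z ≠ 0 := by
      rw [sub_ne_zero]
      intro e
      rw [e] at habs
      exact lt_irrefl _ habs
    field_simp
    ring
  have hzD : z * D = -E := by linear_combination hzD0
  rw [hzD]
  have hre : (1 + ((k:ℂ) - -E)).re = 1 + (k:ℝ) + E.re := by
    simp [Complex.add_re, Complex.sub_re, Complex.natCast_re]
    ring
  rw [hre]
  have hEre : E.re = ∑ i, ∑ l, β i * ((z / zp i l) / (1 - z / zp i l)).re := by
    rw [hEdef, Complex.re_sum]
    apply Finset.sum_congr rfl; intro i _
    rw [Complex.re_sum]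
    apply Finset.sum_congr rfl; intro l _
    exact Complex.re_ofReal_mul _ _
  rw [hEre]
  -- per-i strict lower bound
  have hbound : ∀ i : Fin m, -(((n:ℝ)+1) * β i / 2) <
      ∑ l, β i * ((z / zp i l) / (1 - z / zp i l)).re := by
    intro i
    rcases Nat.eq_zero_or_pos (p i) with h0 | hpos
    · haveI : IsEmpty (Fin (p i)) := by rw [h0]; infer_instance
      rw [Finset.univ_eq_empty, Finset.sum_empty]
      have := hβ0 i
      have hn1 : (0:ℝ) < (n:ℝ) + 1 := by positivity
      nlinarith
    · haveI : Nonempty (Fin (p i)) := ⟨⟨0, hpos⟩⟩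
      have h1 : ∀ l ∈ (Finset.univ : Finset (Fin (p i))),
          β i * (-(1/2) : ℝ) < β i * ((z / zp i l) / (1 - z / zp i l)).re :=
        fun l _ => (mul_lt_mul_iff_right₀ (hβ0 i)).mpr (re_w_div _ (hwlt i l))
      have h2 := Finset.sum_lt_sum_of_nonempty Finset.univ_nonempty h1
      rw [Finset.sum_const, Finset.card_univ, Fintype.card_fin, nsmul_eq_mul] at h2
      have h3 : (p i : ℝ) ≤ (n:ℝ) + 1 := by exact_mod_cast hp i
      have h4 := hβ0 i
      nlinarith
  haveI hm : Nonempty (Fin m) := by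
    rcases Nat.eq_zero_or_pos m with rfl | hm0
    · simp at hβsum
    · exact ⟨⟨0, hm0⟩⟩
  have htot := Finset.sum_lt_sum_of_nonempty Finset.univ_nonempty
    (fun i _ => hbound i)
  have hconst : ∑ i, -(((n:ℝ)+1) * β i / 2) = -((n:ℝ)+1) := by
    have he : ∀ i, -(((n:ℝ)+1) * β i / 2) = (-((n:ℝ)+1)/2) * β i := fun i => by ring
    simp_rw [he]
    rw [← Finset.mul_sum, hβsum]
    ring
  rw [hconst] at htot
  have hkn : (n:ℝ) ≤ (k:ℝ) := by
    have : (n:ℤ) ≤ (k:ℤ) := by omega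
    exact_mod_cast this
  linarith
end
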